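/- Let G_σ be a signed graph with s vertices, c connected components, c₀ balanced connected components, and incidence matrix A over a field K. Then rank(A) = s − c₀ if char(K) ≠ 2, and rank(A) = s − c if char(K) = 2 or if G_σ is balanced. -/

import Mathlib

open Classical Set

structure SignedGraph (V E : Type*) where
  ends : E → V × V
  sign : E → Bool

namespace SignedGraph

variable {V E : Type*} (G : SignedGraph V E)

def touches (e : E) (v : V) : Prop := (G.ends e).1 = v ∨ (G.ends e).2 = v

def verts (X : Set E) : Set V := {v | ∃ e ∈ X, G.touches e v}

noncomputable def deg (X : Set E) (v : V) : ℕ :=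
  ∑ᶠ e ∈ X, ((if (G.ends e).1 = v then 1 else 0) + (if (G.ends e).2 = v then 1 else 0))

def adjIn (X : Set E) (u v : V) : Prop :=
  ∃ e ∈ X, G.ends e = (u, v) ∨ G.ends e = (v, u)

def ConnSet (X : Set E) : Prop :=
  ∀ u ∈ G.verts X, ∀ v ∈ G.verts X, Relation.EqvGen (G.adjIn X) u v

def IsCycle (C : Set E) : Prop :=
  C.Nonempty ∧ G.ConnSet C ∧ ∀ v ∈ G.verts C, G.deg C v = 2

noncomputable def negCount (C : Set E) : ℕ := {e ∈ C | G.sign e = false}.ncard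

def IsBalancedCycle (C : Set E) : Prop := G.IsCycle C ∧ Even (G.negCount C)

def IsUnbalancedCycle (C : Set E) : Prop := G.IsCycle C ∧ ¬ Even (G.negCount C)

def IsPath (P : Set E) : Prop :=
  P.Nonempty ∧ G.ConnSet P ∧ (∀ e ∈ P, (G.ends e).1 ≠ (G.ends e).2) ∧
    (∀ v ∈ G.verts P, G.deg P v ≤ 2) ∧
    {v ∈ G.verts P | G.deg P v = 1}.ncard = 2

def IsBowtie (B : Set E) : Prop :=
  (∃ C₁ C₂, G.IsUnbalancedCycle C₁ ∧ G.IsUnbalancedCycle C₂ ∧ B = C₁ ∪ C₂ ∧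
      ∃ v, G.verts C₁ ∩ G.verts C₂ = {v}) ∨
  (∃ C₁ C₂ P, G.IsUnbalancedCycle C₁ ∧ G.IsUnbalancedCycle C₂ ∧ G.IsPath P ∧
      Disjoint (G.verts C₁) (G.verts C₂) ∧ B = C₁ ∪ C₂ ∪ P ∧
      (∃ v₁, G.verts P ∩ G.verts C₁ = {v₁} ∧ G.deg P v₁ = 1) ∧
      (∃ v₂, G.verts P ∩ G.verts C₂ = {v₂} ∧ G.deg P v₂ = 1) ∧
      Disjoint P C₁ ∧ Disjoint P C₂)

def comp (X : Set E) (v : V) : Set V := {w | Relation.EqvGen (G.adjIn X) v w}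

noncomputable def numComponents (X : Set E) : ℕ := {K | ∃ v, K = G.comp X v}.ncard

def BalancedComponent (X : Set E) (K : Set V) : Prop :=
  (∃ v, K = G.comp X v) ∧ ∀ C ⊆ X, G.verts C ⊆ K → G.IsCycle C → Even (G.negCount C)

noncomputable def numBalancedComponents (X : Set E) : ℕ := {K | G.BalancedComponent X K}.ncard

def Balanced : Prop := ∀ C, G.IsCycle C → Even (G.negCount C)

def Connected : Prop := ∀ u v : V, Relation.EqvGen (G.adjIn Set.univ) u v

noncomputable def incCol (K : Type*) [Field K] (e : E) : V → K := fun v =>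
  (if (G.ends e).1 = v then 1 else 0) +
    (if (G.ends e).2 = v then (if G.sign e then -1 else 1) else 0)

noncomputable def incMatrix (K : Type*) [Field K] : Matrix V E K := fun v e => G.incCol K e v

noncomputable def code (K : Type*) [Field K] : Submodule K (E → K) :=
  Submodule.span K (Set.range fun v => fun e => G.incCol K e v)

end SignedGraph

noncomputable def codeSupport {ι F : Type*} [Field F] (D : Submodule F (ι → F)) : Set ι :=
  {i | ∃ v ∈ D, v i ≠ 0}

noncomputable def GHW {ι F : Type*} [Field F] (C : Submodule F (ι → F)) (r : ℕ) : ℕ :=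
  sInf {n | ∃ D : Submodule F (ι → F), D ≤ C ∧ Module.finrank F D = r ∧ (codeSupport D).ncard = n}

noncomputable def dotL {ι F : Type*} [Fintype ι] [Field F] (v : ι → F) : (ι → F) →ₗ[F] F where
  toFun w := ∑ i, v i * w i
  map_add' a b := by simp [mul_add, Finset.sum_add_distrib]
  map_smul' c a := by simp [Finset.mul_sum, mul_left_comm, smul_eq_mul]

noncomputable def dualCode {ι F : Type*} [Fintype ι] [Field F]
    (C : Submodule F (ι → F)) : Submodule F (ι → F) :=
  ⨅ v ∈ C, LinearMap.ker (dotL v)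

def NonRedundant {α : Type*} {r : ℕ} (C : Fin r → Set α) : Prop :=
  ∀ j, (⋃ i, ⋃ (_ : i ≠ j), C i) ⊂ ⋃ i, C i

namespace SG9

open SignedGraph

variable {V E : Type*} {G : SignedGraph V E} {X : Set E}

inductive AW (G : SignedGraph V E) (X : Set E) : List E → List V → Prop
  | nil (v : V) : AW G X [] [v]
  | cons {e : E} {a b : V} {l : List E} {vs : List V} (he : e ∈ X)
      (hab : G.ends e = (a, b) ∨ G.ends e = (b, a)) (h : AW G X l (b :: vs)) :
      AW G X (e :: l) (a :: b :: vs)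

lemma AW.length_eq {l : List E} {vs : List V} (h : AW G X l vs) : vs.length = l.length + 1 := by
  induction h with
  | nil v => simp
  | cons he hab h ih => simpa using ih

lemma AW.append {l₁ l₂ : List E} {vs₁ vs₂ : List V} (h₁ : AW G X l₁ vs₁) (h₂ : AW G X l₂ vs₂)
    (hm : vs₁.getLast? = vs₂.head?) : AW G X (l₁ ++ l₂) (vs₁ ++ vs₂.tail) := by
  induction h₁ with
  | nil v =>
    cases vs₂ with
    | nil => cases h₂
    | cons m t =>
      simp at hm
      subst hm
      simpa using h₂
  | cons he hab h ih =>
    have := ih (by simpa using hm)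
    exact AW.cons he hab this

lemma AW.reverse {l : List E} {vs : List V} (h : AW G X l vs) :
    AW G X l.reverse vs.reverse := by
  induction h with
  | nil v => simpa using AW.nil (G := G) (X := X) v
  | @cons e a b l vs he hab h ih =>
    have h1 : AW G X [e] [b, a] := AW.cons he hab.symm (AW.nil a)
    have h2 := ih.append h1 (by simp)
    simpa using h2

lemma exists_aw {u v : V} (h : Relation.EqvGen (G.adjIn X) u v) :
    ∃ l vs, AW G X l vs ∧ vs.head? = some u ∧ vs.getLast? = some v := by
  induction h with
  | rel u v h =>
    obtain ⟨e, he, hab⟩ := h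
    exact ⟨[e], [u, v], AW.cons he hab (AW.nil v), rfl, rfl⟩
  | refl u => exact ⟨[], [u], AW.nil u, rfl, rfl⟩
  | symm u v h ih =>
    obtain ⟨l, vs, h1, h2, h3⟩ := ih
    exact ⟨l.reverse, vs.reverse, h1.reverse, by simpa using h3, by simpa using h2⟩
  | trans u v w h1 h2 ih1 ih2 =>
    obtain ⟨l₁, vs₁, a1, a2, a3⟩ := ih1
    obtain ⟨l₂, vs₂, b1, b2, b3⟩ := ih2
    refine ⟨l₁ ++ l₂, vs₁ ++ vs₂.tail, a1.append b1 (by rw [a3, b2]), ?_, ?_⟩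
    · cases vs₁ with
      | nil => simp at a2
      | cons a t => simpa using a2
    · cases vs₂ with
      | nil => simp at b2
      | cons m t =>
        cases t with
        | nil =>
          simp at b3 b2
          subst b3; subst b2
          simpa using a3
        | cons x t' =>
          rw [List.getLast?_append_of_ne_nil _ (by simp)]
          simpa using b3

lemma AW.suffix_from {l : List E} {vs : List V} (h : AW G X l vs) {w : V} (hw : w ∈ vs) :
    ∃ l' vs', AW G X l' (w :: vs') ∧ (w :: vs').getLast? = vs.getLast? ∧ l'.length ≤ l.length := by
  induction h with
  | nil v =>
    simp at hw
    subst hw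
    exact ⟨[], [], AW.nil w, rfl, le_refl _⟩
  | @cons e a b l vs he hab h ih =>
    rcases List.mem_cons.mp hw with h1 | h2
    · subst h1
      exact ⟨e :: l, b :: vs, AW.cons he hab h, rfl, le_refl _⟩
    · obtain ⟨l', vs', a1, a2, a3⟩ := ih h2
      exact ⟨l', vs', a1, by rw [a2]; simp, a3.trans (Nat.le_succ _)⟩

lemma AW.shorten {l : List E} {vs : List V} (h : AW G X l vs) (hnd : ¬ vs.Nodup) :
    ∃ l' vs', AW G X l' vs' ∧ vs'.head? = vs.head? ∧ vs'.getLast? = vs.getLast? ∧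
      l'.length < l.length := by
  induction h with
  | nil v => simp at hnd
  | @cons e a b l vs he hab h ih =>
    by_cases hmem : a ∈ b :: vs
    · obtain ⟨l', vs', a1, a2, a3⟩ := h.suffix_from hmem
      exact ⟨l', a :: vs', a1, rfl, by rw [a2]; simp, Nat.lt_succ_of_le a3⟩
    · have hnd2 : ¬ (b :: vs).Nodup := by
        intro hn
        exact hnd (List.nodup_cons.mpr ⟨hmem, hn⟩)
      obtain ⟨l', vs', a1, a2, a3, a4⟩ := ih hnd2
      cases vs' with
      | nil => simp at a2
      | cons b' t =>
        simp at a2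
        subst a2
        refine ⟨e :: l', a :: b' :: t, AW.cons he hab a1, rfl, ?_, by simpa using a4⟩
        rw [show (a :: b' :: t).getLast? = (b' :: t).getLast? by simp, a3]
        simp

lemma exists_nodup_aw {u v : V} (h : Relation.EqvGen (G.adjIn X) u v) :
    ∃ l vs, AW G X l vs ∧ vs.head? = some u ∧ vs.getLast? = some v ∧ vs.Nodup := by
  classical
  set S : Set ℕ :=
    {n | ∃ l vs, AW G X l vs ∧ vs.head? = some u ∧ vs.getLast? = some v ∧ l.length = n} with hS
  have hSne : S.Nonempty := by
    obtain ⟨l, vs, h1, h2, h3⟩ := exists_aw h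
    exact ⟨l.length, l, vs, h1, h2, h3, rfl⟩
  obtain ⟨l, vs, h1, h2, h3, h4⟩ := Nat.sInf_mem hSne
  refine ⟨l, vs, h1, h2, h3, ?_⟩
  by_contra hnd
  obtain ⟨l', vs', a1, a2, a3, a4⟩ := h1.shorten hnd
  have hmem : l'.length ∈ S := ⟨l', vs', a1, by rw [a2, h2], by rw [a3, h3], rfl⟩
  have := Nat.sInf_le hmem
  omega

lemma AW.getElem_spec {l : List E} {vs : List V} (h : AW G X l vs) (i : ℕ) (hi : i < l.length)
    (hi1 : i < vs.length) (hi2 : i + 1 < vs.length) :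
    l[i] ∈ X ∧
      (G.ends l[i] = (vs[i], vs[i + 1]) ∨ G.ends l[i] = (vs[i + 1], vs[i])) := by
  induction h generalizing i with
  | nil v => simp at hi
  | @cons e a b l vs he hab h ih =>
    cases i with
    | zero => simpa using ⟨he, hab⟩
    | succ j =>
      have := ih j (by simpa using hi) (by simpa using hi1) (by simpa using hi2)
      simpa using this

lemma AW.sign_prod {s : V → ℤ}
    (hs : ∀ f ∈ X, s (G.ends f).1 = (if G.sign f then 1 else -1) * s (G.ends f).2)
    {l : List E} {vs : List V} (h : AW G X l vs) {u v : V}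
    (hu : vs.head? = some u) (hv : vs.getLast? = some v) :
    s u = (∏ i : Fin l.length, (if G.sign l[(i:ℕ)] then (1:ℤ) else -1)) * s v := by
  induction h generalizing u v with
  | nil w =>
    simp at hu hv
    subst hu; subst hv
    simp
  | @cons e a b l vs he hab h ih =>
    simp at hu
    subst hu
    have hv' : (b :: vs).getLast? = some v := by
      rw [← hv]; simp
    have step : s a = (if G.sign e then (1:ℤ) else -1) * s b := by
      have h1 := hs e he
      rcases hab with h2 | h2 <;> rw [h2] at h1 <;>
        rcases Bool.eq_false_or_eq_true (G.sign e) with hb | hb <;>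
        simp [hb] at h1 ⊢ <;> linarith
    have ihb := ih (u := b) rfl hv'
    rw [step, ihb]
    simp only [List.length_cons, Fin.prod_univ_succ, List.getElem_cons_zero, Fin.val_succ,
      List.getElem_cons_succ, Fin.val_zero]
    rw [mul_assoc]; rfl

lemma AW.mem_X {l : List E} {vs : List V} (h : AW G X l vs) {f : E} (hf : f ∈ l) : f ∈ X := by
  induction h with
  | nil v => simp at hf
  | cons he hab h ih =>
    rcases List.mem_cons.mp hf with h1 | h1
    · subst h1; assumption
    · exact ih h1

end SG9
namespace SG9

section Cyc

variable {V E : Type*} [DecidableEq E]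

lemma loop_cyc (G : SignedGraph V E) {e₀ : E} {u : V} (h : G.ends e₀ = (u, u)) :
    G.IsCycle {e₀} ∧ G.negCount {e₀} = (if G.sign e₀ then 0 else 1) := by
  have hverts : G.verts {e₀} = {u} := by
    ext x
    simp [SignedGraph.verts, SignedGraph.touches, h, eq_comm]
  constructor
  · refine ⟨⟨e₀, rfl⟩, ?_, ?_⟩
    · intro a ha b hb
      rw [hverts] at ha hb
      simp at ha hb
      subst ha; subst hb
      exact Relation.EqvGen.refl _
    · intro v hv
      rw [hverts] at hv
      simp at hv
      subst hv
      unfold SignedGraph.deg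
      rw [finsum_mem_singleton]
      simp [h]
  · unfold SignedGraph.negCount
    by_cases hp : G.sign e₀ = false
    · have h2 : {e ∈ ({e₀} : Set E) | G.sign e = false} = {e₀} := by
        ext f
        simp (config := {contextual := true}) [hp]
      rw [h2]
      simp [hp, Set.ncard_singleton]
    · have h2 : {e ∈ ({e₀} : Set E) | G.sign e = false} = ∅ := by
        ext f
        simp (config := {contextual := true}) [hp]
      rw [h2]
      have hp' : G.sign e₀ = true := by simpa using hp
      simp [hp']

lemma cyc_main (G : SignedGraph V E) {n : ℕ} (hn : 0 < n)
    (vf : Fin (n+1) → V) (ef : Fin n → E) (e₀ : E)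
    (hinj : Function.Injective vf)
    (h₀ : G.ends e₀ = (vf 0, vf (Fin.last n)))
    (hef : ∀ i : Fin n, G.ends (ef i) = (vf i.castSucc, vf i.succ) ∨
        G.ends (ef i) = (vf i.succ, vf i.castSucc))
    (hne : ∀ i, ef i ≠ e₀) :
    G.IsCycle (↑(insert e₀ (Finset.image ef Finset.univ)) : Set E) ∧
      G.negCount (↑(insert e₀ (Finset.image ef Finset.univ)) : Set E) =
        (if G.sign e₀ then 0 else 1) +
          (Finset.univ.filter (fun i => G.sign (ef i) = false)).card := by
  classical
  have hefinj : Function.Injective ef := by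
    intro i j hij
    have h1 := hef i
    have h2 := hef j
    rw [hij] at h1
    rcases h1 with h1 | h1 <;> rcases h2 with h2 | h2 <;> rw [h2] at h1 <;>
      simp only [Prod.mk.injEq] at h1 <;>
      obtain ⟨ha, hb⟩ := h1 <;>
      (apply Fin.ext
       have h3 := congrArg Fin.val (hinj ha)
       have h4 := congrArg Fin.val (hinj hb)
       simp only [Fin.coe_castSucc, Fin.val_succ] at h3 h4
       omega)
  set s : Finset E := insert e₀ (Finset.image ef Finset.univ) with hs
  have he₀img : e₀ ∉ Finset.image ef Finset.univ := by
    simp only [Finset.mem_image]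
    rintro ⟨i, -, hi⟩
    exact hne i hi
  have hC : ∀ f ∈ s, f = e₀ ∨ ∃ i, f = ef i := by
    intro f hf
    rcases Finset.mem_insert.mp hf with h | h
    · exact Or.inl h
    · obtain ⟨i, -, hi⟩ := Finset.mem_image.mp h
      exact Or.inr ⟨i, hi.symm⟩
  have hverts : ∀ x ∈ G.verts (↑s : Set E), ∃ j, vf j = x := by
    intro x hx
    obtain ⟨f, hf, htouch⟩ := hx
    rcases hC f hf with rfl | ⟨i, rfl⟩
    · rcases htouch with h | h
      · exact ⟨0, by rw [h₀] at h; simpa using h⟩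
      · exact ⟨Fin.last n, by rw [h₀] at h; simpa using h⟩
    · rcases hef i with h1 | h1 <;> rcases htouch with h | h <;> rw [h1] at h <;> simp at h
      exacts [⟨i.castSucc, h⟩, ⟨i.succ, h⟩, ⟨i.succ, h⟩, ⟨i.castSucc, h⟩]
  have hdeg : ∀ j, G.deg (↑s) (vf j) = 2 := by
    intro j
    unfold SignedGraph.deg
    rw [finsum_mem_coe_finset, hs, Finset.sum_insert he₀img,
      Finset.sum_image (fun a _ b _ h => hefinj h)]
    have h1 : ((if (G.ends e₀).1 = vf j then 1 else 0) +
        (if (G.ends e₀).2 = vf j then 1 else 0) : ℕ)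
        = (if j = 0 then 1 else 0) + (if j = Fin.last n then 1 else 0) := by
      rw [h₀]
      simp only [hinj.eq_iff]
      congr 1 <;> simp [eq_comm]
    have hterm : ∀ i : Fin n,
        ((if (G.ends (ef i)).1 = vf j then 1 else 0) +
          (if (G.ends (ef i)).2 = vf j then 1 else 0) : ℕ)
          = (if i.castSucc = j then 1 else 0) + (if i.succ = j then 1 else 0) := by
      intro i
      rcases hef i with h1 | h1 <;> rw [h1] <;> simp only [hinj.eq_iff] <;>
        first
          | rfl
          | exact add_comm _ _
    simp only [hterm]
    rw [Finset.sum_add_distrib, h1]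
    have hA : ∑ i : Fin n, (if i.castSucc = j then (1:ℕ) else 0)
        = if j = Fin.last n then 0 else 1 := by
      induction j using Fin.lastCases with
      | last =>
        rw [if_pos rfl]
        apply Finset.sum_eq_zero
        intro i _
        rw [if_neg (Fin.castSucc_lt_last i).ne]
      | cast j' =>
        rw [if_neg (Fin.castSucc_lt_last j').ne]
        simp only [Fin.castSucc_inj]
        simp [Finset.sum_ite_eq']
    have hB : ∑ i : Fin n, (if i.succ = j then (1:ℕ) else 0) = if j = 0 then 0 else 1 := by
      induction j using Fin.cases with
      | zero => simp [Fin.succ_ne_zero]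
      | succ j' =>
        rw [if_neg (Fin.succ_ne_zero j')]
        simp only [Fin.succ_inj]
        simp [Finset.sum_ite_eq']
    rw [hA, hB]
    split_ifs <;> omega
  have hconn0 : ∀ j, Relation.EqvGen (G.adjIn ↑s) (vf 0) (vf j) := by
    intro j
    induction j using Fin.induction with
    | zero => exact Relation.EqvGen.refl _
    | succ i ih =>
      refine Relation.EqvGen.trans _ _ _ ih (Relation.EqvGen.rel _ _ ⟨ef i, ?_, hef i⟩)
      simp [hs]
  constructor
  · refine ⟨⟨e₀, by simp [hs]⟩, ?_, ?_⟩
    · intro x hx y hy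
      obtain ⟨j1, rfl⟩ := hverts x hx
      obtain ⟨j2, rfl⟩ := hverts y hy
      exact Relation.EqvGen.trans _ _ _ (Relation.EqvGen.symm _ _ (hconn0 j1)) (hconn0 j2)
    · intro x hx
      obtain ⟨j, rfl⟩ := hverts x hx
      exact hdeg j
  · unfold SignedGraph.negCount
    have hset : {e ∈ (↑s : Set E) | G.sign e = false}
        = ↑(s.filter (fun e => G.sign e = false)) := by
      ext f
      simp
    rw [hset, Set.ncard_coe_finset, hs, Finset.filter_insert]
    have himg : (Finset.image ef Finset.univ).filter (fun e => G.sign e = false)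
        = Finset.image ef (Finset.univ.filter (fun i => G.sign (ef i) = false)) := by
      rw [Finset.filter_image]
    by_cases hp : G.sign e₀ = false
    · rw [if_pos hp, Finset.card_insert_of_notMem
        (fun hmem => he₀img (Finset.mem_of_mem_filter _ hmem)), himg,
        Finset.card_image_of_injective _ hefinj]
      simp [hp, add_comm]
    · have hp' : G.sign e₀ = true := by simpa using hp
      rw [if_neg hp, himg, Finset.card_image_of_injective _ hefinj]
      simp [hp']

end Cyc

end SG9
namespace SG9

lemma head?_getElem {α} (l : List α) (a : α) (h : l.head? = some a) (h0 : 0 < l.length) :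
    l[0] = a := by
  cases l with
  | nil => simp at h
  | cons b t => simpa using h

lemma getLast?_getElem {α} (l : List α) (a : α) (h : l.getLast? = some a)
    (h0 : l.length - 1 < l.length) : l[l.length - 1] = a := by
  have hl : l ≠ [] := by rintro rfl; simp at h0
  rw [List.getLast?_eq_getLast hl] at h
  rw [← List.getLast_eq_getElem hl]
  simpa using h

lemma getLast?_getElem' {α} (l : List α) (a : α) (h : l.getLast? = some a) {k : ℕ}
    (hk : l.length = k + 1) : l[k]'(by omega) = a := by
  have hk' : k = l.length - 1 := by omega
  subst hk'
  exact getLast?_getElem l a h (by omega)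

lemma lemmaA {V E : Type*} [Finite E] (G : SignedGraph V E)
    (X : Set E) (hbal : ∀ C ⊆ X, G.IsCycle C → Even (G.negCount C)) :
    ∃ s : V → ℤ, (∀ v, s v = 1 ∨ s v = -1) ∧
      ∀ e ∈ X, s (G.ends e).1 = (if G.sign e then 1 else -1) * s (G.ends e).2 := by
  classical
  obtain ⟨n, hn⟩ : ∃ n, X.ncard = n := ⟨_, rfl⟩
  induction n using Nat.strong_induction_on generalizing X with
  | _ n IH =>
  rcases Set.eq_empty_or_nonempty X with rfl | ⟨e₀, he₀⟩
  · exact ⟨fun _ => 1, fun v => Or.inl rfl, by simp⟩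
  set X' : Set E := X \ {e₀} with hX'
  have hX'X : X' ⊆ X := Set.diff_subset
  have hX'lt : X'.ncard < n := by
    rw [← hn]
    exact Set.ncard_diff_singleton_lt_of_mem he₀ (Set.toFinite X)
  obtain ⟨s, hpm, hs⟩ :=
    IH X'.ncard hX'lt X' (fun C hC hCyc => hbal C (hC.trans hX'X) hCyc) rfl
  set u := (G.ends e₀).1 with hu
  set v := (G.ends e₀).2 with hv
  have hEnds : G.ends e₀ = (u, v) := rfl
  have he₀X' : e₀ ∉ X' := by simp [hX']
  by_cases hc : s u = (if G.sign e₀ then 1 else -1) * s v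
  · refine ⟨s, hpm, ?_⟩
    intro e he
    by_cases hee : e = e₀
    · subst hee; exact hc
    · exact hs e ⟨he, hee⟩
  by_cases hcon : Relation.EqvGen (G.adjIn X') u v
  swap
  · -- flip branch
    set T : Set V := G.comp X' u with hT
    refine ⟨fun w => if w ∈ T then -s w else s w, ?_, ?_⟩
    · intro w
      by_cases hw : w ∈ T <;> simp [hw] <;> rcases hpm w with h | h <;> simp [h]
    · intro e he
      by_cases hee : e = e₀
      · subst hee
        have huT : u ∈ T := Relation.EqvGen.refl u
        have hvT : v ∉ T := hcon
        rw [← hu, ← hv]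
        simp only [if_pos huT, if_neg hvT]
        rcases hpm u with h1 | h1 <;> rcases hpm v with h2 | h2 <;>
          rcases Bool.eq_false_or_eq_true (G.sign e) with hb | hb <;>
          rw [h1, h2] at hc ⊢ <;> simp [hb] at hc ⊢ <;> omega
      · have heX' : e ∈ X' := ⟨he, hee⟩
        have hadj : G.adjIn X' (G.ends e).1 (G.ends e).2 := ⟨e, heX', Or.inl rfl⟩
        have hiff : (G.ends e).1 ∈ T ↔ (G.ends e).2 ∈ T := by
          constructor
          · intro h; exact Relation.EqvGen.trans _ _ _ h (Relation.EqvGen.rel _ _ hadj)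
          · intro h
            exact Relation.EqvGen.trans _ _ _ h
              (Relation.EqvGen.symm _ _ (Relation.EqvGen.rel _ _ hadj))
        have hcs := hs e heX'
        by_cases h1 : (G.ends e).1 ∈ T
        · have h2 : (G.ends e).2 ∈ T := hiff.mp h1
          simp only [if_pos h1, if_pos h2, hcs]
          ring
        · have h2 : (G.ends e).2 ∉ T := fun h => h1 (hiff.mpr h)
          simp only [if_neg h1, if_neg h2, hcs]
  · -- contradiction branch
    exfalso
    obtain ⟨l, vs, h1, h2, h3, h4⟩ := exists_nodup_aw hcon
    rcases Nat.eq_zero_or_pos l.length with hl0 | hlpos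
    · -- loop case
      have hlnil : l = [] := List.length_eq_zero_iff.mp hl0
      subst hlnil
      cases h1 with
      | nil w =>
        simp at h2 h3
        subst h2
        obtain ⟨hcyc, hcnt⟩ := loop_cyc G (e₀ := e₀) (u := u) (by rw [hEnds, ← h3])
        have heven := hbal {e₀} (by simpa using he₀) hcyc
        rw [hcnt] at heven
        by_cases hb : G.sign e₀ = true
        · rw [hb] at hc
          simp at hc
          rw [← h3] at hc
          exact hc rfl
        · have hbf : G.sign e₀ = false := by simpa using hb
          rw [hbf] at heven
          simp at heven
    · set nn := l.length with hnn
      have hvslen : vs.length = nn + 1 := h1.length_eq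
      set vf : Fin (nn+1) → V := fun i => vs[(i:ℕ)]'(by rw [hvslen]; exact i.isLt) with hvf
      set ef : Fin nn → E := fun i => l[(i:ℕ)] with hef0
      have hefX' : ∀ i, ef i ∈ X' := fun i => h1.mem_X (List.getElem_mem _)
      have hinj : Function.Injective vf := by
        intro i j hij
        have hg := List.nodup_iff_injective_get.mp h4
          (show vs.get ⟨(i:ℕ), by rw [hvslen]; exact i.isLt⟩
              = vs.get ⟨(j:ℕ), by rw [hvslen]; exact j.isLt⟩ by
            simp only [List.get_eq_getElem]
            exact hij)
        exact Fin.ext (by simpa using congrArg Fin.val hg)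
      have hvf0 : vf 0 = u := by
        have h5 := head?_getElem vs u h2 (by omega)
        simpa [hvf] using h5
      have hvfl : vf (Fin.last nn) = v := by
        have h5 := getLast?_getElem' vs v h3 hvslen
        simpa [hvf] using h5
      have h₀' : G.ends e₀ = (vf 0, vf (Fin.last nn)) := by rw [hvf0, hvfl, hEnds]
      have hefspec : ∀ i : Fin nn, G.ends (ef i) = (vf i.castSucc, vf i.succ) ∨
          G.ends (ef i) = (vf i.succ, vf i.castSucc) := by
        intro i
        have hspec := h1.getElem_spec (i:ℕ) i.isLt (by omega) (by omega)
        exact hspec.2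
      have hne : ∀ i, ef i ≠ e₀ := by
        intro i hi
        exact he₀X' (hi ▸ hefX' i)
      obtain ⟨hcyc, hcnt⟩ := cyc_main G hlpos vf ef e₀ hinj h₀' hefspec hne
      have hsub : (↑(insert e₀ (Finset.image ef Finset.univ)) : Set E) ⊆ X := by
        intro f hf
        rcases Finset.mem_insert.mp (Finset.mem_coe.mp hf) with rfl | hf2
        · exact he₀
        · obtain ⟨i, -, rfl⟩ := Finset.mem_image.mp hf2
          exact hX'X (hefX' i)
      have heven := hbal _ hsub hcyc
      rw [hcnt] at heven
      have hprod' : s u =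
          (∏ i : Fin nn, (if G.sign (ef i) then (1:ℤ) else -1)) * s v := h1.sign_prod hs h2 h3
      set P := ∏ i : Fin nn, (if G.sign (ef i) then (1:ℤ) else -1) with hP
      have hPval : P = s u * s v := by
        rcases hpm v with h | h <;> rw [h] at hprod' ⊢ <;> linarith
      have hcontra : (if G.sign e₀ then (1:ℤ) else -1) * P = -1 := by
        rw [hPval]
        rcases hpm u with h1' | h1' <;> rcases hpm v with h2' | h2' <;>
          rcases Bool.eq_false_or_eq_true (G.sign e₀) with hb | hb <;>
          rw [h1', h2'] at hc ⊢ <;> simp [hb] at hc ⊢ <;> omega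
      have hparity : ((-1:ℤ)) ^ ((if G.sign e₀ then 0 else 1) + (Finset.univ.filter (fun i => G.sign (ef i) = false)).card) = 1 := heven.neg_one_pow
      rw [pow_add] at hparity
      have hepow : ((-1:ℤ))^(if G.sign e₀ then 0 else 1) = (if G.sign e₀ then 1 else -1) := by
        rcases Bool.eq_false_or_eq_true (G.sign e₀) with hb | hb <;> simp [hb]
      have hPpow : ((-1:ℤ))^((Finset.univ.filter (fun i => G.sign (ef i) = false)).card) = P := by
        rw [hP, Finset.card_filter, ← Finset.prod_pow_eq_pow_sum]
        apply Finset.prod_congr rfl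
        intro i _
        rcases Bool.eq_false_or_eq_true (G.sign (ef i)) with hb | hb <;> simp [hb]
      rw [hepow, hPpow] at hparity
      omega

end SG9
namespace SG9

variable {V E : Type*} {K : Type*} [Field K]

lemma char_two_of_two_eq_zero {K : Type*} [Field K] (h : (2:K) = 0) : ringChar K = 2 := by
  have hd : ringChar K ∣ 2 := (CharP.cast_eq_zero_iff K (ringChar K) 2).mp (by push_cast; exact h)
  rcases (Nat.prime_two).eq_one_or_self_of_dvd _ hd with h1 | h1
  · exact absurd h1 (CharP.char_ne_one K (ringChar K))
  · exact h1

/-- Edge relation from the kernel condition. -/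
lemma edge_rel (G : SignedGraph V E) {x : V → K}
    (hker : ∀ e, x (G.ends e).1 + (if G.sign e then -1 else 1) * x (G.ends e).2 = 0) (e : E) :
    x (G.ends e).1 = (if G.sign e then (1:K) else -1) * x (G.ends e).2 := by
  have h := hker e
  rcases Bool.eq_false_or_eq_true (G.sign e) with hb | hb <;> rw [hb] at h ⊢ <;>
    simp at h ⊢ <;> linear_combination h

lemma sq_eq_of_eqvgen (G : SignedGraph V E) {x : V → K}
    (hker : ∀ e, x (G.ends e).1 + (if G.sign e then -1 else 1) * x (G.ends e).2 = 0)
    {Y : Set E} {a b : V} (h : Relation.EqvGen (G.adjIn Y) a b) :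
    x a ^ 2 = x b ^ 2 := by
  induction h with
  | rel a b hab =>
    obtain ⟨e, -, hab⟩ := hab
    have h1 := edge_rel G hker e
    rcases hab with h2 | h2 <;> rw [h2] at h1 <;>
      by_cases hb : G.sign e = true <;> simp [hb] at h1 <;> rw [h1] <;> ring
  | refl a => rfl
  | symm a b h ih => exact ih.symm
  | trans a b c h1 h2 ih1 ih2 => exact ih1.trans ih2

lemma ne_zero_of_eqvgen (G : SignedGraph V E) {x : V → K}
    (hker : ∀ e, x (G.ends e).1 + (if G.sign e then -1 else 1) * x (G.ends e).2 = 0)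
    {Y : Set E} {a b : V} (h : Relation.EqvGen (G.adjIn Y) a b) (ha : x a ≠ 0) : x b ≠ 0 := by
  intro hb
  apply ha
  have := sq_eq_of_eqvgen G hker h
  rw [hb] at this
  simpa [pow_eq_zero_iff] using this

lemma even_of_ker [Finite V] [Finite E] (G : SignedGraph V E)
    (hchar : ringChar K ≠ 2) {x : V → K}
    (hker : ∀ e, x (G.ends e).1 + (if G.sign e then -1 else 1) * x (G.ends e).2 = 0)
    {C : Set E} (hC : G.IsCycle C) {v₀ : V} (hv₀ : v₀ ∈ G.verts C) (hx : x v₀ ≠ 0) :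
    Even (G.negCount C) := by
  classical
  set q : K := x v₀ ^ 2 with hq0
  have hq : q ≠ 0 := pow_ne_zero _ hx
  have hconn := hC.2.1
  have hsq : ∀ w ∈ G.verts C, x w ^ 2 = q := by
    intro w hw
    exact (sq_eq_of_eqvgen G hker (hconn v₀ hv₀ w hw)).symm
  have hCfin : C.Finite := Set.toFinite C
  have hVfin : (G.verts C).Finite := Set.toFinite _
  set Cf := hCfin.toFinset with hCf
  set Vf := hVfin.toFinset with hVf
  have hfst : ∀ e ∈ Cf, (G.ends e).1 ∈ Vf := by
    intro e he
    rw [hVf, Set.Finite.mem_toFinset]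
    exact ⟨e, hCfin.mem_toFinset.mp he, Or.inl rfl⟩
  have hsnd : ∀ e ∈ Cf, (G.ends e).2 ∈ Vf := by
    intro e he
    rw [hVf, Set.Finite.mem_toFinset]
    exact ⟨e, hCfin.mem_toFinset.mp he, Or.inr rfl⟩
  set φ : E → V → ℕ := fun e w =>
    (if (G.ends e).1 = w then 1 else 0) + (if (G.ends e).2 = w then 1 else 0) with hφ
  have hdeg : ∀ w ∈ Vf, (∑ e ∈ Cf, φ e w) = 2 := by
    intro w hw
    have h1 := hC.2.2 w (hVfin.mem_toFinset.mp hw)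
    unfold SignedGraph.deg at h1
    rw [← hCfin.coe_toFinset, finsum_mem_coe_finset] at h1
    exact h1
  -- identity 1 : product over edges equals product over vertices with degree exponents
  have hid1 : (∏ e ∈ Cf, x (G.ends e).1 * x (G.ends e).2) = ∏ w ∈ Vf, x w ^ (∑ e ∈ Cf, φ e w) := by
    have hedge : ∀ e ∈ Cf, x (G.ends e).1 * x (G.ends e).2 = ∏ w ∈ Vf, x w ^ (φ e w) := by
      intro e he
      rw [hφ]
      simp only [pow_add]
      rw [Finset.prod_mul_distrib]
      have hh1 : (∏ w ∈ Vf, x w ^ (if (G.ends e).1 = w then 1 else 0)) = x (G.ends e).1 := by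
        have : ∀ w ∈ Vf, x w ^ (if (G.ends e).1 = w then 1 else 0)
            = (if (G.ends e).1 = w then x w else 1) := by
          intro w _
          split <;> simp
        rw [Finset.prod_congr rfl this, Finset.prod_ite_eq, if_pos (hfst e he)]
      have hh2 : (∏ w ∈ Vf, x w ^ (if (G.ends e).2 = w then 1 else 0)) = x (G.ends e).2 := by
        have : ∀ w ∈ Vf, x w ^ (if (G.ends e).2 = w then 1 else 0)
            = (if (G.ends e).2 = w then x w else 1) := by
          intro w _
          split <;> simp
        rw [Finset.prod_congr rfl this, Finset.prod_ite_eq, if_pos (hsnd e he)]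
      rw [hh1, hh2]
    rw [Finset.prod_congr rfl hedge, Finset.prod_comm]
    apply Finset.prod_congr rfl
    intro w _
    rw [Finset.prod_pow_eq_pow_sum]
  -- handshake : card Vf = card Cf
  have hcard : Vf.card = Cf.card := by
    have h1 : ∑ w ∈ Vf, (∑ e ∈ Cf, φ e w) = ∑ e ∈ Cf, ∑ w ∈ Vf, φ e w := Finset.sum_comm
    have h2 : ∀ e ∈ Cf, ∑ w ∈ Vf, φ e w = 2 := by
      intro e he
      rw [hφ]
      simp only [Finset.sum_add_distrib]
      rw [Finset.sum_ite_eq, Finset.sum_ite_eq, if_pos (hfst e he), if_pos (hsnd e he)]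
    rw [Finset.sum_congr rfl hdeg, Finset.sum_congr rfl h2, Finset.sum_const, Finset.sum_const] at h1
    simpa using h1
  -- identity 2 : product over edges via signs
  have hid2 : (∏ e ∈ Cf, x (G.ends e).1 * x (G.ends e).2)
      = (∏ e ∈ Cf, (if G.sign e then (1:K) else -1)) * q ^ Cf.card := by
    have hedge : ∀ e ∈ Cf, x (G.ends e).1 * x (G.ends e).2
        = (if G.sign e then (1:K) else -1) * q := by
      intro e he
      rw [edge_rel G hker e, mul_assoc, ← sq]
      congr 1
      exact hsq _ (hVfin.mem_toFinset.mp (hsnd e he))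
    rw [Finset.prod_congr rfl hedge, Finset.prod_mul_distrib, Finset.prod_const]
  -- combine
  have hdeg2 : (∏ w ∈ Vf, x w ^ (∑ e ∈ Cf, φ e w)) = q ^ Cf.card := by
    have : ∀ w ∈ Vf, x w ^ (∑ e ∈ Cf, φ e w) = q := by
      intro w hw
      rw [hdeg w hw]
      exact hsq w (hVfin.mem_toFinset.mp hw)
    rw [Finset.prod_congr rfl this, Finset.prod_const, hcard]
  have hmain : (∏ e ∈ Cf, (if G.sign e then (1:K) else -1)) * q ^ Cf.card = q ^ Cf.card := by
    rw [← hid2, hid1, hdeg2]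
  have hprod1 : (∏ e ∈ Cf, (if G.sign e then (1:K) else -1)) = 1 :=
    mul_right_cancel₀ (pow_ne_zero _ hq) (by rw [hmain, one_mul])
  -- relate product to negCount
  have hneg : G.negCount C = (Cf.filter (fun e => G.sign e = false)).card := by
    unfold SignedGraph.negCount
    have : {e ∈ C | G.sign e = false} = ↑(Cf.filter (fun e => G.sign e = false)) := by
      ext f
      simp [hCf, Set.Finite.mem_toFinset]
    rw [this, Set.ncard_coe_finset]
  have hpow : ((-1:K)) ^ G.negCount C = 1 := by
    have hh : ((-1:K)) ^ G.negCount C = ∏ e ∈ Cf, (if G.sign e then (1:K) else -1) := by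
      rw [hneg, Finset.card_filter, ← Finset.prod_pow_eq_pow_sum]
      apply Finset.prod_congr rfl
      intro e _
      rcases Bool.eq_false_or_eq_true (G.sign e) with hb | hb <;> simp [hb]
    rw [hh, hprod1]
  by_contra hodd
  rw [(Nat.not_even_iff_odd.mp hodd).neg_one_pow] at hpow
  have h2 : (2:K) = 0 := by linear_combination -hpow
  exact hchar (char_two_of_two_eq_zero h2)

end SG9
namespace SG9

open Matrix

variable {V E : Type*}

section Comp

variable (G : SignedGraph V E)

lemma mem_comp_self (X : Set E) (v : V) : v ∈ G.comp X v := Relation.EqvGen.refl v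

lemma comp_eq_of_rel {X : Set E} {a b : V} (h : Relation.EqvGen (G.adjIn X) a b) :
    G.comp X a = G.comp X b := by
  ext w
  constructor
  · intro hw
    exact Relation.EqvGen.trans _ _ _ (Relation.EqvGen.symm _ _ h) hw
  · intro hw
    exact Relation.EqvGen.trans _ _ _ h hw

lemma comp_eq_comp_of_mem {X : Set E} {a b w : V} (ha : w ∈ G.comp X a) (hb : w ∈ G.comp X b) :
    G.comp X a = G.comp X b :=
  (comp_eq_of_rel G ha).trans (comp_eq_of_rel G hb).symm

lemma ends_rel (e : E) :
    Relation.EqvGen (G.adjIn Set.univ) (G.ends e).1 (G.ends e).2 :=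
  Relation.EqvGen.rel _ _ ⟨e, trivial, Or.inl rfl⟩

lemma edge_mem_iff (b : V) (e : E) :
    (G.ends e).1 ∈ G.comp Set.univ b ↔ (G.ends e).2 ∈ G.comp Set.univ b := by
  constructor
  · intro h
    exact Relation.EqvGen.trans _ _ _ h (ends_rel G e)
  · intro h
    exact Relation.EqvGen.trans _ _ _ h (Relation.EqvGen.symm _ _ (ends_rel G e))

end Comp

variable [Fintype V] [Fintype E]

noncomputable def Wker (G : SignedGraph V E) (K : Type*) [Field K] : Submodule K (V → K) :=
  LinearMap.ker ((G.incMatrix K)ᵀ.mulVecLin)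

lemma mem_Wker (G : SignedGraph V E) (K : Type*) [Field K] {x : V → K} :
    x ∈ Wker G K ↔
      ∀ e, x (G.ends e).1 + (if G.sign e then -1 else 1) * x (G.ends e).2 = 0 := by
  classical
  have hcalc : ∀ e, ((G.incMatrix K)ᵀ.mulVecLin x) e
      = x (G.ends e).1 + (if G.sign e then -1 else 1) * x (G.ends e).2 := by
    intro e
    show ∑ v, (G.incMatrix K)ᵀ e v * x v = _
    unfold SignedGraph.incMatrix SignedGraph.incCol
    show ∑ v, ((if (G.ends e).1 = v then (1:K) else 0) +
      (if (G.ends e).2 = v then (if G.sign e then -1 else 1) else 0)) * x v = _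
    rw [Finset.sum_congr rfl (fun v _ => add_mul _ _ (x v)), Finset.sum_add_distrib]
    congr 1
    · rw [Finset.sum_congr rfl (fun v (_ : v ∈ Finset.univ) => by
        rw [ite_mul, one_mul, zero_mul]), Finset.sum_ite_eq]
      simp
    · rw [Finset.sum_congr rfl (fun v (_ : v ∈ Finset.univ) => by
        rw [ite_mul, zero_mul]), Finset.sum_ite_eq]
      simp
  rw [Wker, LinearMap.mem_ker]
  constructor
  · intro h e
    rw [← hcalc e, h]
    rfl
  · intro h
    funext e
    rw [hcalc e, h e]
    rfl

section Good

variable (G : SignedGraph V E) (K : Type*) [Field K]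

noncomputable def GoodComp : Set (Set V) :=
  {S | (∃ b, S = G.comp Set.univ b) ∧ ∃ x ∈ Wker G K, ∃ w ∈ S, x w ≠ 0}

lemma restrict_mem_Wker {x : V → K} (hx : x ∈ Wker G K) (b : V) :
    (fun w => if w ∈ G.comp Set.univ b then x w else 0) ∈ Wker G K := by
  classical
  rw [mem_Wker] at hx ⊢
  intro e
  by_cases h1 : (G.ends e).1 ∈ G.comp Set.univ b
  · rw [if_pos h1, if_pos ((edge_mem_iff G b e).mp h1)]
    exact hx e
  · rw [if_neg h1, if_neg (fun h => h1 ((edge_mem_iff G b e).mpr h))]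
    ring

lemma finrank_Wker : Module.finrank K (Wker G K) = (GoodComp G K).ncard := by
  classical
  haveI : Fintype {S : Set V // S ∈ GoodComp G K} := Fintype.ofFinite _
  have hch : ∀ S : {S : Set V // S ∈ GoodComp G K}, ∃ q : (V → K) × V,
      q.1 ∈ Wker G K ∧ q.2 ∈ S.1 ∧ q.1 q.2 ≠ 0 := by
    rintro ⟨S, ⟨b, rfl⟩, x, hx, w, hw, hxw⟩
    exact ⟨(x, w), hx, hw, hxw⟩
  choose p hp1 hp2 hp3 using hch
  let φ : (Wker G K) →ₗ[K] ({S : Set V // S ∈ GoodComp G K} → K) :=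
    { toFun := fun x S => (x : V → K) (p S).2
      map_add' := fun x y => rfl
      map_smul' := fun c x => rfl }
  have hker0 : ∀ x : V → K, x ∈ Wker G K → (∀ S, x (p S).2 = 0) → ∀ v, x v = 0 := by
    intro x hx h0 v
    by_contra hv
    have hgood : G.comp Set.univ v ∈ GoodComp G K :=
      ⟨⟨v, rfl⟩, x, hx, v, mem_comp_self G _ v, hv⟩
    have hne := ne_zero_of_eqvgen G ((mem_Wker G K).mp hx) (hp2 ⟨_, hgood⟩) hv
    exact hne (h0 ⟨_, hgood⟩)
  have hinj : Function.Injective φ := by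
    intro x y hxy
    have h0 : ∀ S, ((x - y : Wker G K) : V → K) (p S).2 = 0 := by
      intro S
      have h1 : (x : V → K) (p S).2 = (y : V → K) (p S).2 := congrFun hxy S
      simp [h1]
    have := hker0 _ (x - y).2 h0
    ext v
    have hv := this v
    simpa [sub_eq_zero] using hv
  have hsurj : Function.Surjective φ := by
    intro c
    have hmem : (∑ S : {S : Set V // S ∈ GoodComp G K},
        (c S / (p S).1 (p S).2) • (fun w => if w ∈ S.1 then (p S).1 w else 0)) ∈ Wker G K := by
      apply Submodule.sum_mem
      intro S _
      apply Submodule.smul_mem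
      obtain ⟨b, hb⟩ := S.2.1
      rw [hb]
      exact restrict_mem_Wker G K (hp1 S) b
    refine ⟨⟨_, hmem⟩, ?_⟩
    funext S'
    show (∑ S : {S : Set V // S ∈ GoodComp G K},
        (c S / (p S).1 (p S).2) • (fun w => if w ∈ S.1 then (p S).1 w else 0)) (p S').2 = c S'
    rw [Finset.sum_apply]
    rw [Finset.sum_eq_single S']
    · rw [Pi.smul_apply, smul_eq_mul, if_pos (hp2 S'), div_mul_cancel₀ _ (hp3 S')]
    · intro S _ hSS
      rw [Pi.smul_apply, smul_eq_mul, if_neg, mul_zero]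
      intro hmem2
      apply hSS
      obtain ⟨b, hb⟩ := S.2.1
      obtain ⟨b', hb'⟩ := S'.2.1
      apply Subtype.ext
      rw [hb, hb']
      rw [hb] at hmem2
      have h2 : (p S').2 ∈ G.comp Set.univ b' := by rw [← hb']; exact hp2 S'
      exact comp_eq_comp_of_mem G hmem2 h2
    · intro h
      exact absurd (Finset.mem_univ S') h
  rw [LinearEquiv.finrank_eq (LinearEquiv.ofBijective φ ⟨hinj, hsurj⟩), Module.finrank_pi,
    ← Nat.card_eq_fintype_card, Nat.card_coe_set_eq]

lemma rank_eq_sub [DecidableEq V] :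
    (G.incMatrix K).rank = Fintype.card V - (GoodComp G K).ncard := by
  have h1 := LinearMap.finrank_range_add_finrank_ker ((G.incMatrix K)ᵀ.mulVecLin)
  rw [Module.finrank_pi] at h1
  have h2 : (G.incMatrix K)ᵀ.rank = (G.incMatrix K).rank := Matrix.rank_transpose _
  have h3 : (G.incMatrix K)ᵀ.rank
      = Module.finrank K (LinearMap.range ((G.incMatrix K)ᵀ.mulVecLin)) := rfl
  have h4 := finrank_Wker G K
  rw [Wker] at h4
  omega

end Good

end SG9
namespace SG9

variable {V E : Type*} [Fintype V] [Fintype E]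

lemma good_of_potential (G : SignedGraph V E) (K : Type*) [Field K] (b : V) (s : V → ℤ)
    (hpm : ∀ v, s v = 1 ∨ s v = -1)
    (hsX : ∀ e, (G.ends e).1 ∈ G.comp Set.univ b →
        s (G.ends e).1 = (if G.sign e then 1 else -1) * s (G.ends e).2) :
    G.comp Set.univ b ∈ GoodComp G K := by
  classical
  refine ⟨⟨b, rfl⟩, fun w => if w ∈ G.comp Set.univ b then ((s w : ℤ) : K) else 0, ?_, b,
    mem_comp_self G _ b, ?_⟩
  · rw [mem_Wker]
    intro e
    by_cases h1 : (G.ends e).1 ∈ G.comp Set.univ b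
    · have h2 := (edge_mem_iff G b e).mp h1
      rw [if_pos h1, if_pos h2]
      have h3 := hsX e h1
      have h4 : ((s (G.ends e).1 : ℤ) : K)
          = (((if G.sign e then (1:ℤ) else -1) * s (G.ends e).2 : ℤ) : K) := by
        exact_mod_cast congrArg _ h3
      rcases Bool.eq_false_or_eq_true (G.sign e) with hb | hb <;> rw [hb] at h4 ⊢ <;>
        push_cast at h4 <;> simp at h4 ⊢ <;> linear_combination h4
    · rw [if_neg h1, if_neg (fun h => h1 ((edge_mem_iff G b e).mpr h))]
      ring
  · show (if b ∈ G.comp Set.univ b then ((s b : ℤ) : K) else 0) ≠ 0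
    rw [if_pos (mem_comp_self G _ b)]
    rcases hpm b with h | h <;> rw [h] <;> simp

lemma good_iff_balanced (G : SignedGraph V E) (K : Type*) [Field K] (hchar : ringChar K ≠ 2) :
    GoodComp G K = {S | G.BalancedComponent Set.univ S} := by
  ext S
  constructor
  · rintro ⟨⟨b, rfl⟩, x, hx, w, hw, hxw⟩
    refine ⟨⟨b, rfl⟩, ?_⟩
    intro C hCsub hCverts hCyc
    obtain ⟨e, he⟩ := hCyc.1
    have hv₀ : (G.ends e).1 ∈ G.verts C := ⟨e, he, Or.inl rfl⟩
    have hv₀S : (G.ends e).1 ∈ G.comp Set.univ b := hCverts hv₀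
    have hrel : Relation.EqvGen (G.adjIn Set.univ) w (G.ends e).1 :=
      Relation.EqvGen.trans _ _ _ (Relation.EqvGen.symm _ _ hw) hv₀S
    have hx0 : x (G.ends e).1 ≠ 0 := ne_zero_of_eqvgen G ((mem_Wker G K).mp hx) hrel hxw
    exact even_of_ker G hchar ((mem_Wker G K).mp hx) hCyc hv₀ hx0
  · rintro ⟨⟨b, rfl⟩, hbalS⟩
    set XS : Set E := {e | (G.ends e).1 ∈ G.comp Set.univ b} with hXS
    have hXbal : ∀ C ⊆ XS, G.IsCycle C → Even (G.negCount C) := by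
      intro C hC hCyc
      apply hbalS C (Set.subset_univ C) ?_ hCyc
      intro w hw
      obtain ⟨e, heC, ht⟩ := hw
      have heXS : e ∈ XS := hC heC
      rcases ht with h | h
      · rw [← h]; exact heXS
      · rw [← h]; exact (edge_mem_iff G b e).mp heXS
    obtain ⟨s, hpm, hsX⟩ := lemmaA G XS hXbal
    exact good_of_potential G K b s hpm (fun e he => hsX e he)

lemma good_eq_comps (G : SignedGraph V E) (K : Type*) [Field K]
    (h : ringChar K = 2 ∨ G.Balanced) :
    GoodComp G K = {S | ∃ b, S = G.comp Set.univ b} := by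
  classical
  ext S
  constructor
  · rintro ⟨h1, -⟩
    exact h1
  · rintro ⟨b, rfl⟩
    rcases h with h2 | hbal
    · haveI : CharP K 2 := by rw [← h2]; exact ringChar.charP K
      have h20 : (2:K) = 0 := by exact_mod_cast CharP.cast_eq_zero K 2
      refine ⟨⟨b, rfl⟩, fun w => if w ∈ G.comp Set.univ b then 1 else 0, ?_, b,
        mem_comp_self G _ b, by simp [mem_comp_self G _ b]⟩
      rw [mem_Wker]
      intro e
      by_cases h1 : (G.ends e).1 ∈ G.comp Set.univ b
      · rw [if_pos h1, if_pos ((edge_mem_iff G b e).mp h1)]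
        rcases Bool.eq_false_or_eq_true (G.sign e) with hb | hb <;> rw [hb] <;> simp <;>
          linear_combination h20
      · rw [if_neg h1, if_neg (fun h => h1 ((edge_mem_iff G b e).mpr h))]
        ring
    · obtain ⟨s, hpm, hsX⟩ := lemmaA G Set.univ (fun C _ hC => hbal C hC)
      exact good_of_potential G K b s hpm (fun e _ => hsX e trivial)

end SG9

theorem stmt9 {V E : Type*} [Fintype V] [Fintype E] [DecidableEq V] (G : SignedGraph V E)
    (K : Type*) [Field K] :
    (ringChar K ≠ 2 →
      (G.incMatrix K).rank = Fintype.card V - G.numBalancedComponents Set.univ) ∧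
    (ringChar K = 2 ∨ G.Balanced →
      (G.incMatrix K).rank = Fintype.card V - G.numComponents Set.univ) := by
  constructor
  · intro hchar
    rw [SG9.rank_eq_sub G K, SG9.good_iff_balanced G K hchar]
    rfl
  · intro h
    rw [SG9.rank_eq_sub G K, SG9.good_eq_comps G K h]
    rfl
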